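/- Combining the Gauss formula with Petrunin's averaging: if an immersed m-manifold X in Y satisfies Sc_{|m}(Y) ≥ σ on all tangent m-planes, then at every point Sc(X) ≥ σ − (m(m+2)/2)·Π, where Π is the spherical average of ‖II(τ,τ)‖² over unit tangent vectors τ; in particular Sc(X) ≥ σ − (m(m+2)/2)·(curv⊥)². -/

import Mathlib

open Finset Matrix MeasureTheory


noncomputable def hmat {m : ℕ} (v : Fin m → ℝ) : Matrix (Fin m) (Fin m) ℝ :=
  1 - (2 : ℝ) • Matrix.vecMulVec v v

lemma hmat_mem {m : ℕ} (v : Fin m → ℝ) (hv : v ⬝ᵥ v = 1) :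
    hmat v ∈ Matrix.orthogonalGroup (Fin m) ℝ := by
  rw [Matrix.mem_orthogonalGroup_iff]
  have hstar : star (hmat v) = hmat v := by
    ext a b
    rcases eq_or_ne a b with h|h
    · subst h; simp [hmat, Matrix.star_apply, Matrix.vecMulVec_apply, Matrix.one_apply]
    · simp [hmat, Matrix.star_apply, Matrix.vecMulVec_apply, Matrix.one_apply, h, Ne.symm h]
      ring
  rw [show (hmat v)ᵀ = hmat v by rw [← Matrix.conjTranspose_eq_transpose_of_trivial, ← Matrix.star_eq_conjTranspose]; exact hstar]
  have hMM : (Matrix.vecMulVec v v) * (Matrix.vecMulVec v v) = Matrix.vecMulVec v v := by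
    ext a b
    simp only [Matrix.mul_apply, Matrix.vecMulVec_apply]
    have h1 : ∑ c, v a * v c * (v c * v b) = v a * v b * ∑ c, v c * v c := by
      rw [Finset.mul_sum]
      exact Finset.sum_congr rfl fun c _ => by ring
    rw [h1, show ∑ c, v c * v c = v ⬝ᵥ v from rfl, hv, mul_one]
  have h2 : hmat v * hmat v = 1 - (4:ℝ) • vecMulVec v v + (4:ℝ) • (vecMulVec v v * vecMulVec v v) := by
    simp only [hmat]
    simp only [Matrix.sub_mul, Matrix.mul_sub, Matrix.one_mul, Matrix.mul_one,
      Matrix.smul_mul, Matrix.mul_smul, smul_smul]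
    module
  rw [h2, hMM]
  module

lemma hmat_mulVec {m : ℕ} (v : Fin m → ℝ) (x : Fin m → ℝ) :
    (hmat v).mulVec x = fun t => x t - 2 * (v ⬝ᵥ x) * v t := by
  funext t
  simp only [hmat, Matrix.mulVec, dotProduct, Matrix.sub_apply, Matrix.smul_apply,
    Matrix.vecMulVec_apply, Matrix.one_apply, smul_eq_mul, sub_mul, ite_mul, one_mul, zero_mul,
    Finset.sum_sub_distrib, Finset.sum_ite_eq, Finset.mem_univ, if_true]
  have : ∑ c, 2 * (v t * v c) * x c = 2 * (∑ c, v c * x c) * v t := by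
    rw [Finset.mul_sum, Finset.sum_mul]
    exact Finset.sum_congr rfl fun c _ => by ring
  rw [this]

section
variable {m : ℕ} {μ : Measure (Fin m → ℝ)}

lemma int_inv [IsProbabilityMeasure μ]
    (hinv : ∀ O ∈ Matrix.orthogonalGroup (Fin m) ℝ,
      MeasurePreserving (fun x => O.mulVec x) μ μ)
    (v : Fin m → ℝ) (hv : v ⬝ᵥ v = 1) (g : (Fin m → ℝ) → ℝ)
    (hg : AEStronglyMeasurable g μ) :
    ∫ x, g x ∂μ = ∫ x, g ((hmat v).mulVec x) ∂μ := by
  have hmp := hinv _ (hmat_mem v hv)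
  have hg' : AEStronglyMeasurable g (Measure.map (fun x => (hmat v).mulVec x) μ) := by
    rw [hmp.map_eq]; exact hg
  rw [← MeasureTheory.integral_map hmp.measurable.aemeasurable hg', hmp.map_eq]

lemma hae (hsupp : μ {x | ∑ i, x i ^ 2 ≠ 1} = 0) : ∀ᵐ x ∂μ, ∑ i, x i ^ 2 = 1 := by
  rw [MeasureTheory.ae_iff]; exact hsupp

lemma int_bdd [IsProbabilityMeasure μ] (hsupp : μ {x | ∑ i, x i ^ 2 ≠ 1} = 0)
    (f : (Fin m → ℝ) → ℝ) (hf : Continuous f) (B : ℝ)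
    (hB : ∀ τ : Fin m → ℝ, ∑ i, τ i ^ 2 = 1 → |f τ| ≤ B) : Integrable f μ := by
  refine Integrable.mono' (integrable_const B) hf.aestronglyMeasurable ?_
  filter_upwards [hae hsupp] with τ hτ
  simpa using hB τ hτ

lemma coord_abs (τ : Fin m → ℝ) (h : ∑ i, τ i ^ 2 = 1) (t : Fin m) : |τ t| ≤ 1 := by
  have h1 : τ t ^ 2 ≤ 1 := by
    rw [← h]
    exact Finset.single_le_sum (f := fun i => τ i ^ 2) (fun i _ => sq_nonneg _) (Finset.mem_univ t)
  nlinarith [abs_nonneg (τ t), sq_abs (τ t)]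

lemma mono_int [IsProbabilityMeasure μ] (hsupp : μ {x | ∑ i, x i ^ 2 ≠ 1} = 0)
    (i j k l : Fin m) : Integrable (fun τ => τ i * τ j * τ k * τ l) μ := by
  refine int_bdd hsupp _ (by continuity) 1 fun τ hτ => ?_
  have hi := coord_abs τ hτ i; have hj := coord_abs τ hτ j
  have hk := coord_abs τ hτ k; have hl := coord_abs τ hτ l
  have : |τ i * τ j * τ k * τ l| = |τ i| * |τ j| * |τ k| * |τ l| := by
    rw [abs_mul, abs_mul, abs_mul]
  rw [this]
  have m1 : |τ i| * |τ j| ≤ 1 := mul_le_one₀ hi (abs_nonneg _) hj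
  have m2 : |τ i| * |τ j| * |τ k| ≤ 1 :=
    mul_le_one₀ m1 (abs_nonneg _) hk
  exact mul_le_one₀ m2 (abs_nonneg _) hl

lemma sq_int [IsProbabilityMeasure μ] (hsupp : μ {x | ∑ i, x i ^ 2 ≠ 1} = 0)
    (i j : Fin m) : Integrable (fun τ => τ i ^ 2 * τ j ^ 2) μ := by
  have := mono_int hsupp i i j j
  simpa [mul_assoc, mul_comm, mul_left_comm, sq] using
    (mono_int (μ := μ) hsupp i i j j).congr (by filter_upwards with τ; ring)

lemma odd_vanish [IsProbabilityMeasure μ]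
    (hinv : ∀ O ∈ Matrix.orthogonalGroup (Fin m) ℝ,
      MeasurePreserving (fun x => O.mulVec x) μ μ)
    (t : Fin m) (f : (Fin m → ℝ) → ℝ) (hmeas : AEStronglyMeasurable f μ)
    (hodd : ∀ x : Fin m → ℝ, f (fun s => if s = t then -x s else x s) = - f x) :
    ∫ x, f x ∂μ = 0 := by
  have hv : (Pi.single t 1 : Fin m → ℝ) ⬝ᵥ Pi.single t 1 = 1 := by
    simp [dotProduct, Pi.single_apply]
  have hflip : ∀ x : Fin m → ℝ, (hmat (Pi.single t 1)).mulVec x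
      = fun s => if s = t then -x s else x s := by
    intro x
    rw [hmat_mulVec]
    have hdot : (Pi.single t 1 : Fin m → ℝ) ⬝ᵥ x = x t := by
      simp [dotProduct, Pi.single_apply]
    funext s
    rcases eq_or_ne s t with h|h
    · subst h; simp [hdot, Pi.single_apply]; ring
    · simp [hdot, Pi.single_apply, h]
  have h1 := int_inv hinv _ hv f hmeas
  have h2 : ∫ x, f ((hmat (Pi.single t 1)).mulVec x) ∂μ = ∫ x, (- f x) ∂μ := by
    refine integral_congr_ae ?_
    filter_upwards with x
    rw [hflip x, hodd x]
  rw [integral_neg] at h2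
  linarith

end
section
variable {m : ℕ} {μ : Measure (Fin m → ℝ)}

lemma sum_two {m : ℕ} (i j : Fin m) (hij : i ≠ j) (f : Fin m → ℝ) (a b : ℝ)
    (hf : ∀ s, f s = (if s = i then a else 0) + (if s = j then b else 0)) :
    ∑ s, f s = a + b := by
  rw [Finset.sum_congr rfl fun s _ => hf s, Finset.sum_add_distrib]
  simp [Finset.sum_ite_eq']

lemma rot_rel [IsProbabilityMeasure μ] (hsupp : μ {x | ∑ i, x i ^ 2 ≠ 1} = 0)
    (hinv : ∀ O ∈ Matrix.orthogonalGroup (Fin m) ℝ,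
      MeasurePreserving (fun x => O.mulVec x) μ μ)
    (i j : Fin m) (hij : i ≠ j) :
    3 * ∫ τ, τ i * τ i * τ i * τ i ∂μ =
      (∫ τ, τ j * τ j * τ j * τ j ∂μ) + 6 * ∫ τ, τ i * τ i * τ j * τ j ∂μ := by
  have h2 : Real.sqrt 2 ^ 2 = 2 := Real.sq_sqrt (by norm_num)
  have hs2 : Real.sqrt 2 ≤ 2 := by nlinarith [Real.sqrt_nonneg 2]
  have hs0 : (0:ℝ) ≤ Real.sqrt 2 := Real.sqrt_nonneg 2
  set a : ℝ := Real.sqrt (2 - Real.sqrt 2) / 2 with ha_def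
  set b : ℝ := Real.sqrt (2 + Real.sqrt 2) / 2 with hb_def
  have ha2 : a ^ 2 = (2 - Real.sqrt 2) / 4 := by
    rw [ha_def, div_pow, Real.sq_sqrt (by linarith)]; norm_num
  have hb2 : b ^ 2 = (2 + Real.sqrt 2) / 4 := by
    rw [hb_def, div_pow, Real.sq_sqrt (by linarith)]; norm_num
  have hab : a * b = Real.sqrt 2 / 4 := by
    rw [ha_def, hb_def, div_mul_div_comm, ← Real.sqrt_mul (by linarith)]
    rw [show (2 - Real.sqrt 2) * (2 + Real.sqrt 2) = 2 by linear_combination -h2]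
    norm_num
  set v : Fin m → ℝ := fun s => if s = i then a else if s = j then b else 0 with hv_def
  have hv : v ⬝ᵥ v = 1 := by
    show ∑ s, v s * v s = 1
    rw [sum_two i j hij _ (a*a) (b*b) ?_]
    · linear_combination ha2 + hb2
    · intro s
      rcases eq_or_ne s i with h|h
      · simp [hv_def, h, hij]
      · rcases eq_or_ne s j with h'|h'
        · simp [hv_def, h', h, Ne.symm hij]
        · simp [hv_def, h, h']
  have hdot : ∀ x : Fin m → ℝ, v ⬝ᵥ x = a * x i + b * x j := by
    intro x
    show ∑ s, v s * x s = _
    rw [sum_two i j hij _ (a * x i) (b * x j) ?_]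
    intro s
    rcases eq_or_ne s i with h|h
    · subst h; simp [hv_def, hij]
    · rcases eq_or_ne s j with h'|h'
      · subst h'; simp [hv_def, h]
      · simp [hv_def, h, h']
  have hHi : ∀ x : Fin m → ℝ, ((hmat v).mulVec x) i = Real.sqrt 2 / 2 * (x i - x j) := by
    intro x
    rw [hmat_mulVec, hdot x]
    have hvi : v i = a := by simp [hv_def]
    simp only [hvi]
    linear_combination (-2 * (x i)) * ha2 + (-2 * (x j)) * hab
  have hmeas : AEStronglyMeasurable (fun τ : Fin m → ℝ => τ i * τ i * τ i * τ i) μ :=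
    ((((continuous_apply i).mul (continuous_apply i)).mul (continuous_apply i)).mul
      (continuous_apply i)).aestronglyMeasurable
  have base := int_inv hinv v hv _ hmeas
  have expand : ∫ x, (fun τ : Fin m → ℝ => τ i * τ i * τ i * τ i) ((hmat v).mulVec x) ∂μ
      = ∫ x, ((1/4) * (x i*x i*x i*x i) + (-1) * (x i*x i*x i*x j)
          + (3/2) * (x i*x i*x j*x j) + (-1) * (x i*x j*x j*x j)
          + (1/4) * (x j*x j*x j*x j)) ∂μ := by
    refine integral_congr_ae (Filter.Eventually.of_forall fun x => ?_)
    simp only [hHi x]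
    linear_combination ((Real.sqrt 2 ^ 2 + 2) / 16 * (x i - x j) ^ 4) * h2
  have I1 := (mono_int hsupp i i i i).const_mul (1/4 : ℝ)
  have I2 := (mono_int hsupp i i i j).const_mul (-1 : ℝ)
  have I3 := (mono_int hsupp i i j j).const_mul (3/2 : ℝ)
  have I4 := (mono_int hsupp i j j j).const_mul (-1 : ℝ)
  have I5 := (mono_int hsupp j j j j).const_mul (1/4 : ℝ)
  rw [expand] at base
  have combine : ∫ x, ((1/4 : ℝ) * (x i*x i*x i*x i) + (-1) * (x i*x i*x i*x j)
          + (3/2) * (x i*x i*x j*x j) + (-1) * (x i*x j*x j*x j)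
          + (1/4) * (x j*x j*x j*x j)) ∂μ
      = (∫ x : Fin m → ℝ, (1/4 : ℝ) * (x i*x i*x i*x i) ∂μ)
        + (∫ x : Fin m → ℝ, (-1 : ℝ) * (x i*x i*x i*x j) ∂μ)
        + (∫ x : Fin m → ℝ, (3/2 : ℝ) * (x i*x i*x j*x j) ∂μ)
        + (∫ x : Fin m → ℝ, (-1 : ℝ) * (x i*x j*x j*x j) ∂μ)
        + (∫ x : Fin m → ℝ, (1/4 : ℝ) * (x j*x j*x j*x j) ∂μ) := by
    have e45 : ∫ x, ((1/4 : ℝ) * (x i*x i*x i*x i) + (-1) * (x i*x i*x i*x j)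
          + (3/2) * (x i*x i*x j*x j) + (-1) * (x i*x j*x j*x j)
          + (1/4) * (x j*x j*x j*x j)) ∂μ
        = (∫ x, ((1/4 : ℝ) * (x i*x i*x i*x i) + (-1) * (x i*x i*x i*x j)
          + (3/2) * (x i*x i*x j*x j) + (-1) * (x i*x j*x j*x j)) ∂μ)
          + ∫ x : Fin m → ℝ, (1/4 : ℝ) * (x j*x j*x j*x j) ∂μ :=
      integral_add (((I1.add I2).add I3).add I4) I5
    have e34 : ∫ x, ((1/4 : ℝ) * (x i*x i*x i*x i) + (-1) * (x i*x i*x i*x j)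
          + (3/2) * (x i*x i*x j*x j) + (-1) * (x i*x j*x j*x j)) ∂μ
        = (∫ x, ((1/4 : ℝ) * (x i*x i*x i*x i) + (-1) * (x i*x i*x i*x j)
          + (3/2) * (x i*x i*x j*x j)) ∂μ)
          + ∫ x : Fin m → ℝ, (-1 : ℝ) * (x i*x j*x j*x j) ∂μ :=
      integral_add ((I1.add I2).add I3) I4
    have e23 : ∫ x, ((1/4 : ℝ) * (x i*x i*x i*x i) + (-1) * (x i*x i*x i*x j)
          + (3/2) * (x i*x i*x j*x j)) ∂μ
        = (∫ x, ((1/4 : ℝ) * (x i*x i*x i*x i) + (-1) * (x i*x i*x i*x j)) ∂μ)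
          + ∫ x : Fin m → ℝ, (3/2 : ℝ) * (x i*x i*x j*x j) ∂μ :=
      integral_add (I1.add I2) I3
    have e12 : ∫ x, ((1/4 : ℝ) * (x i*x i*x i*x i) + (-1) * (x i*x i*x i*x j)) ∂μ
        = (∫ x : Fin m → ℝ, (1/4 : ℝ) * (x i*x i*x i*x i) ∂μ)
          + ∫ x : Fin m → ℝ, (-1 : ℝ) * (x i*x i*x i*x j) ∂μ :=
      integral_add I1 I2
    rw [e45, e34, e23, e12]
  rw [combine, integral_const_mul, integral_const_mul, integral_const_mul,
      integral_const_mul, integral_const_mul] at base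
  have z1 : ∫ τ, τ i * τ i * τ i * τ j ∂μ = 0 := by
    refine odd_vanish hinv j _ ((((continuous_apply i).mul (continuous_apply i)).mul
      (continuous_apply i)).mul (continuous_apply j)).aestronglyMeasurable ?_
    intro x
    show (if i = j then -x i else x i) * (if i = j then -x i else x i) *
      (if i = j then -x i else x i) * (if j = j then -x j else x j) = _
    rw [if_neg hij, if_pos rfl]; ring
  have z2 : ∫ τ, τ i * τ j * τ j * τ j ∂μ = 0 := by
    refine odd_vanish hinv i _ (((((continuous_apply i).mul (continuous_apply j)).mul
      (continuous_apply j)).mul (continuous_apply j))).aestronglyMeasurable ?_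
    intro x
    show (if i = i then -x i else x i) * (if j = i then -x j else x j) *
      (if j = i then -x j else x j) * (if j = i then -x j else x j) = _
    rw [if_neg (Ne.symm hij), if_pos rfl]; ring
  rw [z1, z2] at base
  linarith

end
section
variable {m : ℕ} {μ : Measure (Fin m → ℝ)}

lemma sq_int' [IsProbabilityMeasure μ] (hsupp : μ {x | ∑ i, x i ^ 2 ≠ 1} = 0) (i : Fin m) :
    Integrable (fun τ => τ i * τ i) μ := by
  refine int_bdd hsupp _ ((continuous_apply i).mul (continuous_apply i)) 1 fun τ hτ => ?_
  have hi := coord_abs τ hτ i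
  rw [abs_mul]
  exact mul_le_one₀ hi (abs_nonneg _) hi

lemma moments [IsProbabilityMeasure μ] (hm : 1 ≤ m)
    (hsupp : μ {x | ∑ i, x i ^ 2 ≠ 1} = 0)
    (hinv : ∀ O ∈ Matrix.orthogonalGroup (Fin m) ℝ,
      MeasurePreserving (fun x => O.mulVec x) μ μ) :
    (∀ i : Fin m, ∫ τ, τ i * τ i * τ i * τ i ∂μ = 3/((m:ℝ)*(m+2))) ∧
    (∀ i j : Fin m, i ≠ j → ∫ τ, τ i * τ i * τ j * τ j ∂μ = 1/((m:ℝ)*(m+2))) := by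
  rcases eq_or_lt_of_le hm with hm1 | hm2
  · -- m = 1
    have hm1' : m = 1 := hm1.symm
    subst hm1'
    constructor
    · intro i
      have : ∫ τ : Fin 1 → ℝ, τ i * τ i * τ i * τ i ∂μ = ∫ _ : Fin 1 → ℝ, (1:ℝ) ∂μ := by
        refine integral_congr_ae ?_
        filter_upwards [hae hsupp] with τ hτ
        have h0 : τ i ^ 2 = 1 := by
          have : i = 0 := Subsingleton.elim i 0
          subst this
          simpa [Fin.sum_univ_one] using hτ
        nlinarith [h0]
      rw [this]; simp; norm_num
    · intro i j hij
      exact absurd (Subsingleton.elim i j) hij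
  · -- m ≥ 2
    have hrot := fun (i j : Fin m) (hij : i ≠ j) => rot_rel hsupp hinv i j hij
    have esymm : ∀ i j : Fin m, (∫ τ, τ i * τ i * τ j * τ j ∂μ) = ∫ τ, τ j * τ j * τ i * τ i ∂μ := by
      intro i j
      exact integral_congr_ae (Filter.Eventually.of_forall fun τ => by ring)
    have hc_eq : ∀ i j : Fin m, i ≠ j →
        (∫ τ, τ i * τ i * τ i * τ i ∂μ) = ∫ τ, τ j * τ j * τ j * τ j ∂μ := by
      intro i j hij
      have h1 := hrot i j hij
      have h2 := hrot j i hij.symm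
      rw [← esymm i j] at h2
      linarith
    have he_eq : ∀ i j : Fin m, i ≠ j →
        (∫ τ, τ i * τ i * τ j * τ j ∂μ) = (∫ τ, τ i * τ i * τ i * τ i ∂μ) / 3 := by
      intro i j hij
      have h1 := hrot i j hij
      have h2 := hc_eq i j hij
      linarith
    have hsum_e : ∀ i : Fin m, ∑ j, (∫ τ, τ i * τ i * τ j * τ j ∂μ) = ∫ τ, τ i * τ i ∂μ := by
      intro i
      rw [← integral_finset_sum _ (fun j _ => mono_int hsupp i i j j)]
      refine integral_congr_ae ?_
      filter_upwards [hae hsupp] with τ hτ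
      have : ∑ j, τ i * τ i * τ j * τ j = (τ i * τ i) * ∑ j, τ j ^ 2 := by
        rw [Finset.mul_sum]
        exact Finset.sum_congr rfl fun j _ => by ring
      rw [this, hτ, mul_one]
    have hsum_s : ∑ i, (∫ τ, τ i * τ i ∂μ) = 1 := by
      rw [← integral_finset_sum _ (fun i _ => sq_int' hsupp i)]
      have : ∫ τ : Fin m → ℝ, (∑ i, τ i * τ i) ∂μ = ∫ _ : Fin m → ℝ, (1:ℝ) ∂μ := by
        refine integral_congr_ae ?_
        filter_upwards [hae hsupp] with τ hτ
        rw [← hτ]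
        exact Finset.sum_congr rfl fun i _ => (sq (τ i)).symm ▸ by ring
      rw [this]; simp
    -- s i = c i * (m+2)/3
    have hs_val : ∀ i : Fin m, (∫ τ, τ i * τ i ∂μ)
        = (∫ τ, τ i * τ i * τ i * τ i ∂μ) * ((m:ℝ) + 2) / 3 := by
      intro i
      have h1 := hsum_e i
      rw [← Finset.add_sum_erase _ _ (Finset.mem_univ i)] at h1
      have h2 : ∑ j ∈ Finset.univ.erase i, (∫ τ, τ i * τ i * τ j * τ j ∂μ)
          = ((m:ℝ) - 1) * ((∫ τ, τ i * τ i * τ i * τ i ∂μ) / 3) := by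
        rw [Finset.sum_congr rfl fun j hj => he_eq i j (Finset.mem_erase.mp hj).1.symm]
        rw [Finset.sum_const, Finset.card_erase_of_mem (Finset.mem_univ i)]
        simp only [Finset.card_univ, Fintype.card_fin, nsmul_eq_mul]
        rw [Nat.cast_sub hm, Nat.cast_one]
      rw [h2] at h1
      linarith
    -- all c equal; compute value
    obtain ⟨i0, j0, hij0⟩ := Fintype.exists_pair_of_one_lt_card
      (by rw [Fintype.card_fin]; exact hm2)
    have hcc : ∀ i : Fin m, (∫ τ, τ i * τ i * τ i * τ i ∂μ)
        = ∫ τ, τ i0 * τ i0 * τ i0 * τ i0 ∂μ := by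
      intro i
      rcases eq_or_ne i i0 with h|h
      · rw [h]
      · exact hc_eq i i0 h
    have hfin : (m:ℝ) * ((∫ τ, τ i0 * τ i0 * τ i0 * τ i0 ∂μ) * ((m:ℝ) + 2) / 3) = 1 := by
      rw [← hsum_s]
      rw [Finset.sum_congr rfl fun i _ => (hs_val i).trans (by rw [hcc i])]
      rw [Finset.sum_const, Finset.card_univ, Fintype.card_fin, nsmul_eq_mul]
    have hmpos : (0:ℝ) < m := by exact_mod_cast Nat.lt_of_lt_of_le Nat.zero_lt_one hm
    have hcval : (∫ τ, τ i0 * τ i0 * τ i0 * τ i0 ∂μ) = 3/((m:ℝ)*((m:ℝ)+2)) := by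
      field_simp at hfin ⊢
      linarith
    constructor
    · intro i; rw [hcc i, hcval]
    · intro i j hij
      rw [he_eq i j hij, hcc i, hcval]
      field_simp
end
section
variable {m : ℕ} {μ : Measure (Fin m → ℝ)}

lemma z_single [IsProbabilityMeasure μ]
    (hinv : ∀ O ∈ Matrix.orthogonalGroup (Fin m) ℝ,
      MeasurePreserving (fun x => O.mulVec x) μ μ)
    (i j k l : Fin m) (h1 : i ≠ j) (h2 : i ≠ k) (h3 : i ≠ l) :
    ∫ τ, τ i * τ j * τ k * τ l ∂μ = 0 := by
  refine odd_vanish hinv i _ ((((continuous_apply i).mul (continuous_apply j)).mul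
    (continuous_apply k)).mul (continuous_apply l)).aestronglyMeasurable ?_
  intro x
  show (if i = i then -x i else x i) * (if j = i then -x j else x j) *
    (if k = i then -x k else x k) * (if l = i then -x l else x l) = _
  rw [if_pos rfl, if_neg (Ne.symm h1), if_neg (Ne.symm h2), if_neg (Ne.symm h3)]
  ring

lemma ichg (f g : (Fin m → ℝ) → ℝ) (h : ∀ x, f x = g x) :
    ∫ x, f x ∂μ = ∫ x, g x ∂μ :=
  integral_congr_ae (Filter.Eventually.of_forall h)

lemma I4_formula [IsProbabilityMeasure μ] (hm : 1 ≤ m)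
    (hsupp : μ {x | ∑ i, x i ^ 2 ≠ 1} = 0)
    (hinv : ∀ O ∈ Matrix.orthogonalGroup (Fin m) ℝ,
      MeasurePreserving (fun x => O.mulVec x) μ μ)
    (i j k l : Fin m) :
    ∫ τ, τ i * τ j * τ k * τ l ∂μ = 1/((m:ℝ)*(m+2)) *
      ((if i = j then (1:ℝ) else 0) * (if k = l then (1:ℝ) else 0)
       + (if i = k then (1:ℝ) else 0) * (if j = l then (1:ℝ) else 0)
       + (if i = l then (1:ℝ) else 0) * (if j = k then (1:ℝ) else 0)) := by
  obtain ⟨hc, he⟩ := moments hm hsupp hinv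
  by_cases hij : i = j
  · subst hij
    by_cases hkl : k = l
    · subst hkl
      by_cases hik : i = k
      · subst hik
        rw [hc i]
        have hm0 : (m:ℝ) ≠ 0 := ne_of_gt (by exact_mod_cast Nat.lt_of_lt_of_le Nat.zero_lt_one hm)
        have hm2' : (m:ℝ) + 2 ≠ 0 := by positivity
        field_simp
        norm_num
      · rw [he i k hik]
        simp [hik, fun h : i = k => hik h]
    · -- i = j, k ≠ l
      by_cases hik : k = i
      · subst hik
        have hlk : l ≠ k := Ne.symm hkl
        have e1 : ∫ τ, τ k * τ k * τ k * τ l ∂μ = ∫ τ, τ l * τ k * τ k * τ k ∂μ :=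
          ichg _ _ fun τ => by ring
        rw [e1, z_single hinv l k k k hlk hlk hlk]
        simp [hkl, fun h : k = l => hkl h]
      · have e1 : ∫ τ, τ i * τ i * τ k * τ l ∂μ = ∫ τ, τ k * τ i * τ i * τ l ∂μ :=
          ichg _ _ fun τ => by ring
        rw [e1, z_single hinv k i i l hik hik hkl]
        have hik' : i ≠ k := fun h => hik h.symm
        simp [hkl, hik']
  · by_cases hkl : k = l
    · subst hkl
      -- i ≠ j
      by_cases hik : i = k
      · subst hik
        have hji : j ≠ i := Ne.symm hij
        have e1 : ∫ τ, τ i * τ j * τ i * τ i ∂μ = ∫ τ, τ j * τ i * τ i * τ i ∂μ :=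
          ichg _ _ fun τ => by ring
        rw [e1, z_single hinv j i i i hji hji hji]
        simp [hij, hji]
      · by_cases hjk : j = k
        · subst hjk
          rw [z_single hinv i j j j hij hij hij]
          simp [hij, hik]
        · rw [z_single hinv i j k k hij hik hik]
          simp [hij, hik, hjk]
    · -- i ≠ j, k ≠ l
      by_cases hik : i = k
      · subst hik
        by_cases hjl : j = l
        · subst hjl
          have e1 : ∫ τ, τ i * τ j * τ i * τ j ∂μ = ∫ τ, τ i * τ i * τ j * τ j ∂μ :=
            ichg _ _ fun τ => by ring
          rw [e1, he i j hij]
          simp [hij, hkl]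
        · have hji : j ≠ i := Ne.symm hij
          have e1 : ∫ τ, τ i * τ j * τ i * τ l ∂μ = ∫ τ, τ j * τ i * τ i * τ l ∂μ :=
            ichg _ _ fun τ => by ring
          rw [e1, z_single hinv j i i l hji hji hjl]
          simp [hij, hkl, hjl]
      · by_cases hil : i = l
        · subst hil
          by_cases hjk : j = k
          · subst hjk
            have e1 : ∫ τ, τ i * τ j * τ j * τ i ∂μ = ∫ τ, τ i * τ i * τ j * τ j ∂μ :=
              ichg _ _ fun τ => by ring
            rw [e1, he i j hij]
            simp [hij, hkl, hik]
          · have hki : k ≠ i := Ne.symm hik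
            have hkj : k ≠ j := Ne.symm hjk
            have e1 : ∫ τ, τ i * τ j * τ k * τ i ∂μ = ∫ τ, τ k * τ j * τ i * τ i ∂μ :=
              ichg _ _ fun τ => by ring
            rw [e1, z_single hinv k j i i hkj hki hki]
            simp [hij, hkl, hik, hjk]
        · rw [z_single hinv i j k l hij hik hil]
          simp [hij, hik, hil]
end
section
variable {m : ℕ} {μ : Measure (Fin m → ℝ)}

lemma petrunin [IsProbabilityMeasure μ] (hm : 1 ≤ m)
    (hsupp : μ {x | ∑ i, x i ^ 2 ≠ 1} = 0)
    (hinv : ∀ O ∈ Matrix.orthogonalGroup (Fin m) ℝ,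
      MeasurePreserving (fun x => O.mulVec x) μ μ)
    (A : Matrix (Fin m) (Fin m) ℝ) (hA : A.IsSymm) :
    ∫ τ, (τ ⬝ᵥ A.mulVec τ) ^ 2 ∂μ
      = 1/((m:ℝ)*(m+2)) * (A.trace ^ 2 + 2 * ∑ i₁, ∑ i₂, A i₁ i₂ ^ 2) := by
  have hquad : ∀ τ : Fin m → ℝ,
      τ ⬝ᵥ A.mulVec τ = ∑ p : Fin m × Fin m, A p.1 p.2 * (τ p.1 * τ p.2) := by
    intro τ
    rw [Fintype.sum_prod_type]
    show ∑ i, τ i * (A.mulVec τ i) = _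
    refine Finset.sum_congr rfl fun i _ => ?_
    show τ i * ∑ j, A i j * τ j = _
    rw [Finset.mul_sum]
    exact Finset.sum_congr rfl fun j _ => by ring
  have hsq : ∀ τ : Fin m → ℝ, (τ ⬝ᵥ A.mulVec τ) ^ 2
      = ∑ p : Fin m × Fin m, ∑ q : Fin m × Fin m,
          (A p.1 p.2 * A q.1 q.2) * (τ p.1 * τ p.2 * τ q.1 * τ q.2) := by
    intro τ
    rw [sq, hquad, Finset.sum_mul_sum]
    exact Finset.sum_congr rfl fun p _ => Finset.sum_congr rfl fun q _ => by ring
  have hint : ∀ p q : Fin m × Fin m,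
      Integrable (fun τ : Fin m → ℝ =>
        (A p.1 p.2 * A q.1 q.2) * (τ p.1 * τ p.2 * τ q.1 * τ q.2)) μ :=
    fun p q => (mono_int hsupp p.1 p.2 q.1 q.2).const_mul _
  have step1 : ∫ τ, (τ ⬝ᵥ A.mulVec τ) ^ 2 ∂μ
      = ∑ p : Fin m × Fin m, ∑ q : Fin m × Fin m,
          (A p.1 p.2 * A q.1 q.2) * ∫ τ, τ p.1 * τ p.2 * τ q.1 * τ q.2 ∂μ := by
    rw [ichg _ _ hsq,
      integral_finset_sum _ (fun p _ => integrable_finset_sum _ (fun q _ => hint p q))]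
    refine Finset.sum_congr rfl fun p _ => ?_
    rw [integral_finset_sum _ (fun q _ => hint p q)]
    exact Finset.sum_congr rfl fun q _ => integral_const_mul _ _
  rw [step1]
  have step2 : ∀ p q : Fin m × Fin m,
      (A p.1 p.2 * A q.1 q.2) * ∫ τ, τ p.1 * τ p.2 * τ q.1 * τ q.2 ∂μ
      = 1/((m:ℝ)*(m+2)) *
        ((A p.1 p.2 * A q.1 q.2) * ((if p.1 = p.2 then (1:ℝ) else 0) * (if q.1 = q.2 then 1 else 0))
        + (A p.1 p.2 * A q.1 q.2) * ((if p.1 = q.1 then (1:ℝ) else 0) * (if p.2 = q.2 then 1 else 0))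
        + (A p.1 p.2 * A q.1 q.2) * ((if p.1 = q.2 then (1:ℝ) else 0) * (if p.2 = q.1 then 1 else 0))) := by
    intro p q
    rw [I4_formula hm hsupp hinv p.1 p.2 q.1 q.2]
    ring
  rw [Finset.sum_congr rfl fun p _ => Finset.sum_congr rfl fun q _ => step2 p q]
  have T1 : ∑ p : Fin m × Fin m, ∑ q : Fin m × Fin m,
      (A p.1 p.2 * A q.1 q.2) * ((if p.1 = p.2 then (1:ℝ) else 0) * (if q.1 = q.2 then 1 else 0))
      = A.trace ^ 2 := by
    have h1 : ∑ p : Fin m × Fin m, A p.1 p.2 * (if p.1 = p.2 then (1:ℝ) else 0) = A.trace := by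
      rw [Fintype.sum_prod_type]
      simp [mul_ite, Finset.sum_ite_eq', Matrix.trace, Matrix.diag]
    have h2 : ∀ p q : Fin m × Fin m, (A p.1 p.2 * A q.1 q.2) *
        ((if p.1 = p.2 then (1:ℝ) else 0) * (if q.1 = q.2 then 1 else 0))
        = (A p.1 p.2 * (if p.1 = p.2 then (1:ℝ) else 0))
          * (A q.1 q.2 * (if q.1 = q.2 then (1:ℝ) else 0)) := fun p q => by ring
    rw [Finset.sum_congr rfl fun p _ => Finset.sum_congr rfl fun q _ => h2 p q,
        ← Finset.sum_mul_sum, h1, sq]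
  have T2 : ∑ p : Fin m × Fin m, ∑ q : Fin m × Fin m,
      (A p.1 p.2 * A q.1 q.2) * ((if p.1 = q.1 then (1:ℝ) else 0) * (if p.2 = q.2 then 1 else 0))
      = ∑ i₁, ∑ i₂, A i₁ i₂ ^ 2 := by
    simp only [Fintype.sum_prod_type]
    refine Finset.sum_congr rfl fun i _ => Finset.sum_congr rfl fun j _ => ?_
    have hptw : ∀ k l : Fin m, (A i j * A k l) * ((if i = k then (1:ℝ) else 0) * (if j = l then 1 else 0))
        = (if j = l then (if i = k then A i j * A k l else 0) else 0) := fun k l => by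
      split_ifs <;> ring
    rw [Finset.sum_congr rfl fun k (_ : k ∈ Finset.univ) =>
      Finset.sum_congr rfl fun l (_ : l ∈ Finset.univ) => hptw k l]
    simp [Finset.sum_ite_eq, sq]
  have T3 : ∑ p : Fin m × Fin m, ∑ q : Fin m × Fin m,
      (A p.1 p.2 * A q.1 q.2) * ((if p.1 = q.2 then (1:ℝ) else 0) * (if p.2 = q.1 then 1 else 0))
      = ∑ i₁, ∑ i₂, A i₁ i₂ ^ 2 := by
    simp only [Fintype.sum_prod_type]
    refine Finset.sum_congr rfl fun i _ => Finset.sum_congr rfl fun j _ => ?_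
    have hptw : ∀ k l : Fin m, (A i j * A k l) * ((if i = l then (1:ℝ) else 0) * (if j = k then 1 else 0))
        = (if i = l then (if j = k then A i j * A k l else 0) else 0) := fun k l => by
      split_ifs <;> ring
    rw [Finset.sum_congr rfl fun k (_ : k ∈ Finset.univ) =>
      Finset.sum_congr rfl fun l (_ : l ∈ Finset.univ) => hptw k l]
    have hsymm : A j i = A i j := hA.apply i j
    simp [Finset.sum_ite_eq, hsymm, sq]
  simp only [← Finset.mul_sum]
  congr 1
  simp only [Finset.sum_add_distrib]
  rw [T1, T2, T3]
  ring

end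

/-- Gauss formula combined with Petrunin's averaging: if `Sc_{|m}(Y) ≥ σ`, then
`Sc(X) ≥ σ − (m(m+2)/2)·Π`, where `Π` is the spherical average of
`‖II(τ,τ)‖²`; in particular `Sc(X) ≥ σ − (m(m+2)/2)·(curv⊥)²`. -/
theorem stmt_14 (m k : ℕ) (hm : 1 ≤ m)
    (II : Fin k → Matrix (Fin m) (Fin m) ℝ) (hsym : ∀ j, (II j).IsSymm)
    (μ : Measure (Fin m → ℝ)) [IsProbabilityMeasure μ]
    (hsupp : μ {x | ∑ i, x i ^ 2 ≠ 1} = 0)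
    (hinv : ∀ O ∈ Matrix.orthogonalGroup (Fin m) ℝ,
      MeasurePreserving (fun x => O.mulVec x) μ μ)
    (ScX ScY σ : ℝ) (hσ : σ ≤ ScY)
    (hGauss : ScX = ScY + (∑ j, (II j).trace ^ 2)
        - ∑ j, ∑ i₁, ∑ i₂, (II j i₁ i₂) ^ 2)
    (C : ℝ) (hC : 0 ≤ C)
    (hcurv : ∀ τ : Fin m → ℝ, ∑ i, τ i ^ 2 = 1 →
      ∑ j, (τ ⬝ᵥ (II j).mulVec τ) ^ 2 ≤ C ^ 2) :
    σ - ((m : ℝ) * (m + 2) / 2) *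
        (∑ j, ∫ τ, (τ ⬝ᵥ (II j).mulVec τ) ^ 2 ∂μ) ≤ ScX ∧
    σ - ((m : ℝ) * (m + 2) / 2) * C ^ 2 ≤ ScX := by
  have hm0 : (m:ℝ) ≠ 0 := ne_of_gt (by exact_mod_cast Nat.lt_of_lt_of_le Nat.zero_lt_one hm)
  have hm2' : (m:ℝ) + 2 ≠ 0 := by positivity
  set S1 : ℝ := ∑ j, (II j).trace ^ 2 with hS1
  set S2 : ℝ := ∑ j, ∑ i₁, ∑ i₂, (II j i₁ i₂) ^ 2 with hS2
  have hS1n : 0 ≤ S1 := Finset.sum_nonneg fun j _ => sq_nonneg _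
  have hS2n : 0 ≤ S2 :=
    Finset.sum_nonneg fun j _ => Finset.sum_nonneg fun i₁ _ =>
      Finset.sum_nonneg fun i₂ _ => sq_nonneg _
  have hPi : ∑ j, ∫ τ, (τ ⬝ᵥ (II j).mulVec τ) ^ 2 ∂μ
      = ∑ j, 1/((m:ℝ)*(m+2)) * ((II j).trace ^ 2 + 2 * ∑ i₁, ∑ i₂, (II j i₁ i₂) ^ 2) :=
    Finset.sum_congr rfl fun j _ => petrunin hm hsupp hinv (II j) (hsym j)
  have hKPi : ((m:ℝ) * (m + 2) / 2) * (∑ j, ∫ τ, (τ ⬝ᵥ (II j).mulVec τ) ^ 2 ∂μ)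
      = (1/2) * S1 + S2 := by
    rw [hPi, Finset.mul_sum, hS1, hS2, Finset.mul_sum, ← Finset.sum_add_distrib]
    refine Finset.sum_congr rfl fun j _ => ?_
    field_simp
  have goal1 : σ - ((m : ℝ) * (m + 2) / 2) *
      (∑ j, ∫ τ, (τ ⬝ᵥ (II j).mulVec τ) ^ 2 ∂μ) ≤ ScX := by
    rw [hKPi, hGauss]
    linarith
  refine ⟨goal1, ?_⟩
  -- second part
  have hcont : ∀ j, Continuous fun τ : Fin m → ℝ => (τ ⬝ᵥ (II j).mulVec τ) ^ 2 := by
    intro j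
    have : Continuous fun τ : Fin m → ℝ => τ ⬝ᵥ (II j).mulVec τ := by
      show Continuous fun τ : Fin m → ℝ => ∑ i, τ i * ∑ j2, II j i j2 * τ j2
      exact continuous_finset_sum _ fun i _ => (continuous_apply i).mul
        (continuous_finset_sum _ fun j2 _ => continuous_const.mul (continuous_apply j2))
    exact this.pow 2
  have hintj : ∀ j, Integrable (fun τ : Fin m → ℝ => (τ ⬝ᵥ (II j).mulVec τ) ^ 2) μ := by
    intro j
    refine int_bdd hsupp _ (hcont j) (C ^ 2) fun τ hτ => ?_
    have h1 : (τ ⬝ᵥ (II j).mulVec τ) ^ 2 ≤ ∑ j', (τ ⬝ᵥ (II j').mulVec τ) ^ 2 :=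
      Finset.single_le_sum (f := fun j' => (τ ⬝ᵥ (II j').mulVec τ) ^ 2)
        (fun j' _ => sq_nonneg _) (Finset.mem_univ j)
    rw [abs_of_nonneg (sq_nonneg _)]
    exact h1.trans (hcurv τ hτ)
  have hPile : (∑ j, ∫ τ, (τ ⬝ᵥ (II j).mulVec τ) ^ 2 ∂μ) ≤ C ^ 2 := by
    rw [← integral_finset_sum _ (fun j _ => hintj j)]
    have hb : ∀ᵐ τ ∂μ, (∑ j, (τ ⬝ᵥ (II j).mulVec τ) ^ 2) ≤ C ^ 2 := by
      filter_upwards [hae hsupp] with τ hτ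
      exact hcurv τ hτ
    calc ∫ τ, (∑ j, (τ ⬝ᵥ (II j).mulVec τ) ^ 2) ∂μ
        ≤ ∫ _, C ^ 2 ∂μ :=
          integral_mono_ae (integrable_finset_sum _ (fun j _ => hintj j))
            (integrable_const _) hb
      _ = C ^ 2 := by simp
  have hKn : (0:ℝ) ≤ (m : ℝ) * (m + 2) / 2 := by positivity
  have := mul_le_mul_of_nonneg_left hPile hKn
  linarith
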